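/- Let μ ∈ (0,n) and let K_Λ^μ = {λ ∈ ℝⁿ : (∑ᵢ λᵢ)² - μ·∑ᵢ λᵢ² ≥ 0 and ∑ᵢ λᵢ ≥ 0}. Then the dual cone of K_Λ^μ with respect to the standard inner product on ℝⁿ equals K_Λ^{n-μ}. -/

import Mathlib

set_option maxHeartbeats 1000000

/-- For μ ∈ (0,n) and n ≥ 2, the dual cone of
`K_Λ^μ = {λ ∈ ℝⁿ : (∑ᵢ λᵢ)² - μ·∑ᵢ λᵢ² ≥ 0, ∑ᵢ λᵢ ≥ 0}`
with respect to the standard inner product equals `K_Λ^{n-μ}`. -/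
theorem stmt3 (n : ℕ) (hn : 2 ≤ n) (μ : ℝ) (hμ0 : 0 < μ) (hμn : μ < n) :
    {y : Fin n → ℝ |
        ∀ x ∈ {x : Fin n → ℝ |
          (∑ i, x i) ^ 2 - μ * ∑ i, (x i) ^ 2 ≥ 0 ∧ ∑ i, x i ≥ 0},
          0 ≤ ∑ i, y i * x i} =
      {y : Fin n → ℝ |
        (∑ i, y i) ^ 2 - ((n : ℝ) - μ) * ∑ i, (y i) ^ 2 ≥ 0 ∧ ∑ i, y i ≥ 0} := by
  have hn2 : (2:ℝ) ≤ (n:ℝ) := by exact_mod_cast hn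
  have hnpos : (0:ℝ) < (n:ℝ) := by linarith
  ext y
  simp only [Set.mem_setOf_eq]
  constructor
  · intro hy
    set S := ∑ i, y i with hSdef
    set Q := ∑ i, (y i)^2 with hQdef
    have hcard : (Finset.univ : Finset (Fin n)).card = n := by simp
    -- S ≥ 0 : test with the all-ones vector
    have hS : 0 ≤ S := by
      have h1 := hy (fun _ => (1:ℝ)) ?_
      · simpa [hSdef] using h1
      · constructor
        · simp only [Finset.sum_const, hcard, nsmul_eq_mul, mul_one, one_pow]
          nlinarith
        · simp only [Finset.sum_const, hcard, nsmul_eq_mul, mul_one]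
          positivity
    refine ⟨?_, hS⟩
    -- key quantity
    have hB : S^2 ≤ (n:ℝ) * Q := by
      have := sq_sum_le_card_mul_sum_sq (s := Finset.univ) (f := y)
      simpa [hcard, hSdef, hQdef] using this
    set B := (n:ℝ) * Q - S^2 with hBdef
    have hB0 : 0 ≤ B := by linarith
    rcases eq_or_lt_of_le hB0 with hB1 | hB1
    · -- B = 0 : then nQ = S², conclusion easy
      have hQ0 : 0 ≤ Q := Finset.sum_nonneg fun i _ => sq_nonneg _
      nlinarith
    · -- B > 0 : test with x i = a - (n * y i - S), a = √(μ B / (n - μ))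
      set a := Real.sqrt (μ * B / ((n:ℝ) - μ)) with hadef
      have ha0 : 0 ≤ a := Real.sqrt_nonneg _
      have hμn' : (0:ℝ) < (n:ℝ) - μ := by linarith
      have ha2 : a^2 = μ * B / ((n:ℝ) - μ) := by
        rw [hadef, Real.sq_sqrt]; positivity
      set x : Fin n → ℝ := fun i => a - ((n:ℝ) * y i - S) with hxdef
      have hsx : ∑ i, x i = (n:ℝ) * a := by
        simp only [hxdef, Finset.sum_sub_distrib, Finset.sum_const, hcard,
          nsmul_eq_mul, ← Finset.mul_sum, ← hSdef]
        ring
      have hqx : ∑ i, (x i)^2 = (n:ℝ) * a^2 + (n:ℝ) * B := by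
        have : ∀ i, (x i)^2 = a^2 - 2*a*((n:ℝ) * y i - S)
            + ((n:ℝ)^2 * (y i)^2 - 2*(n:ℝ)*S*(y i) + S^2) := by
          intro i; simp only [hxdef]; ring
        rw [Finset.sum_congr rfl fun i _ => this i]
        simp only [Finset.sum_add_distrib, Finset.sum_sub_distrib, Finset.sum_const, hcard,
          nsmul_eq_mul, ← Finset.mul_sum, ← hSdef, ← hQdef]
        rw [hBdef]; ring
      have hmem : (∑ i, x i) ^ 2 - μ * ∑ i, (x i) ^ 2 ≥ 0 ∧ ∑ i, x i ≥ 0 := by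
        constructor
        · rw [hsx, hqx]
          have : μ * B = a^2 * ((n:ℝ) - μ) := by rw [ha2]; field_simp
          nlinarith
        · rw [hsx]; positivity
      have hyx := hy x hmem
      have hyxval : ∑ i, y i * x i = a * S - B := by
        have : ∀ i, y i * x i = a * y i - ((n:ℝ) * (y i)^2 - S * y i) := by
          intro i; simp only [hxdef]; ring
        rw [Finset.sum_congr rfl fun i _ => this i]
        simp only [Finset.sum_sub_distrib, ← Finset.mul_sum, ← hSdef, ← hQdef]
        rw [hBdef]; ring
      rw [hyxval] at hyx
      -- a S ≥ B > 0, square it: a² S² ≥ B², with a² = μB/(n-μ)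
      have haS : B ≤ a * S := by linarith
      have h2 : B^2 ≤ (a*S)^2 := by nlinarith
      have h3 : (a*S)^2 = μ * B / ((n:ℝ) - μ) * S^2 := by rw [mul_pow, ha2]
      rw [h3] at h2
      have h4 : ((n:ℝ) - μ) * B^2 ≤ μ * B * S^2 := by
        rw [div_mul_eq_mul_div, le_div_iff₀ hμn'] at h2; linarith
      have h5 : ((n:ℝ) - μ) * B ≤ μ * S^2 := by
        have := mul_le_mul_of_nonneg_right h4 (le_of_lt (by positivity : (0:ℝ) < 1/B))
        calc ((n:ℝ) - μ) * B = ((n:ℝ) - μ) * B^2 * (1/B) := by field_simp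
          _ ≤ μ * B * S^2 * (1/B) := this
          _ = μ * S^2 := by field_simp
      rw [hBdef] at h5
      nlinarith
  · rintro ⟨hy1, hy2⟩ x ⟨hx1, hx2⟩
    set S := ∑ i, y i with hSdef
    set Q := ∑ i, (y i)^2 with hQdef
    set s := ∑ i, x i with hsdef
    set q := ∑ i, (x i)^2 with hqdef
    set P := ∑ i, y i * x i with hPdef
    have hcard : (Finset.univ : Finset (Fin n)).card = n := by simp
    have hBy : S^2 ≤ (n:ℝ) * Q := by
      have := sq_sum_le_card_mul_sum_sq (s := Finset.univ) (f := y)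
      simpa [hcard, hSdef, hQdef] using this
    have hBx : s^2 ≤ (n:ℝ) * q := by
      have := sq_sum_le_card_mul_sum_sq (s := Finset.univ) (f := x)
      simpa [hcard, hsdef, hqdef] using this
    -- Cauchy-Schwarz for shifted vectors: (nP - sS)² ≤ (nq - s²)(nQ - S²)
    have hcs := Finset.sum_mul_sq_le_sq_mul_sq Finset.univ
      (fun i => (n:ℝ) * x i - s) (fun i => (n:ℝ) * y i - S)
    have e1 : ∑ i, ((n:ℝ) * x i - s) * ((n:ℝ) * y i - S)
        = (n:ℝ)^2 * P - (n:ℝ) * s * S := by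
      have : ∀ i, ((n:ℝ) * x i - s) * ((n:ℝ) * y i - S)
          = (n:ℝ)^2 * (y i * x i) - (n:ℝ)*S*(x i) - (n:ℝ)*s*(y i) + s*S := by
        intro i; ring
      rw [Finset.sum_congr rfl fun i _ => this i]
      simp only [Finset.sum_add_distrib, Finset.sum_sub_distrib, ← Finset.mul_sum,
        Finset.sum_const, hcard, nsmul_eq_mul, ← hSdef, ← hsdef, ← hPdef]
      ring
    have e2 : ∑ i, ((n:ℝ) * x i - s)^2 = (n:ℝ)^2 * q - (n:ℝ) * s^2 := by
      have : ∀ i, ((n:ℝ) * x i - s)^2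
          = (n:ℝ)^2 * (x i)^2 - 2*(n:ℝ)*s*(x i) + s^2 := by intro i; ring
      rw [Finset.sum_congr rfl fun i _ => this i]
      simp only [Finset.sum_add_distrib, Finset.sum_sub_distrib, ← Finset.mul_sum,
        Finset.sum_const, hcard, nsmul_eq_mul, ← hsdef, ← hqdef]
      ring
    have e3 : ∑ i, ((n:ℝ) * y i - S)^2 = (n:ℝ)^2 * Q - (n:ℝ) * S^2 := by
      have : ∀ i, ((n:ℝ) * y i - S)^2
          = (n:ℝ)^2 * (y i)^2 - 2*(n:ℝ)*S*(y i) + S^2 := by intro i; ring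
      rw [Finset.sum_congr rfl fun i _ => this i]
      simp only [Finset.sum_add_distrib, Finset.sum_sub_distrib, ← Finset.mul_sum,
        Finset.sum_const, hcard, nsmul_eq_mul, ← hSdef, ← hQdef]
      ring
    rw [e1, e2, e3] at hcs
    -- now pure algebra
    have hq0 : 0 ≤ q := Finset.sum_nonneg fun i _ => sq_nonneg _
    have hQ0 : 0 ≤ Q := Finset.sum_nonneg fun i _ => sq_nonneg _
    -- μ(nq - s²) ≤ (n-μ)s², (n-μ)(nQ - S²) ≤ μS²
    have hA : μ * ((n:ℝ)*q - s^2) ≤ ((n:ℝ) - μ) * s^2 := by nlinarith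
    have hBB : ((n:ℝ) - μ) * ((n:ℝ)*Q - S^2) ≤ μ * S^2 := by nlinarith
    have hμn' : (0:ℝ) < (n:ℝ) - μ := by linarith
    have hAB : ((n:ℝ)*q - s^2) * ((n:ℝ)*Q - S^2) ≤ s^2 * S^2 := by
      have h0A : 0 ≤ (n:ℝ)*q - s^2 := by linarith
      have h0B : 0 ≤ (n:ℝ)*Q - S^2 := by linarith
      nlinarith [mul_le_mul hA hBB (by positivity) (by positivity)]
    have hn2pos : (0:ℝ) < (n:ℝ)^2 := by positivity
    have h7 : (n:ℝ)^2 * ((n:ℝ)*P - s*S)^2 ≤ (n:ℝ)^2 * (s*S)^2 := by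
      nlinarith [hcs, mul_le_mul_of_nonneg_left hAB (sq_nonneg (n:ℝ))]
    have h6 : ((n:ℝ)*P - s*S)^2 ≤ (s*S)^2 := (mul_le_mul_iff_right₀ hn2pos).mp h7
    by_contra hP
    push_neg at hP
    have hnP : (n:ℝ) * P < 0 := mul_neg_of_pos_of_neg hnpos hP
    nlinarith [h6, mul_nonneg hx2 hy2, hnP]
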